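/- Let u ∈ M_n(ℂ) ⊗ M_k(ℂ) be a biunitary. Then the linear span of the set of products { u(y ⊗ 1)u* · (1 ⊗ z) : y ∈ M_n(ℂ), z ∈ M_k(ℂ) } is all of M_n(ℂ) ⊗ M_k(ℂ). That is, the vertex-model commuting square associated to u is non-degenerate. -/

import Mathlib

open Matrix

/-- The partial transpose `(t ⊗ id)u` in the first leg. -/
def pt {α β : Type*} (u : Matrix (α × β) (α × β) ℂ) : Matrix (α × β) (α × β) ℂ :=
  fun p q => u (q.1, p.2) (p.1, q.2)

/-- `u` is a biunitary: both `u` and its partial transpose `(t ⊗ id)u` are unitary. -/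
def IsBiunitary {α β : Type*} [Fintype α] [Fintype β] [DecidableEq α] [DecidableEq β]
    (u : Matrix (α × β) (α × β) ℂ) : Prop :=
  u * uᴴ = 1 ∧ uᴴ * u = 1 ∧ pt u * (pt u)ᴴ = 1 ∧ (pt u)ᴴ * pt u = 1

/-- `y ⊗ 1`, viewed as a matrix indexed by pairs. -/
noncomputable def tensorOne {α β : Type*} [DecidableEq β] (y : Matrix α α ℂ) :
    Matrix (α × β) (α × β) ℂ :=
  fun p q => y p.1 q.1 * (if p.2 = q.2 then 1 else 0)

/-- `1 ⊗ z`, viewed as a matrix indexed by pairs. -/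
noncomputable def oneTensor {α β : Type*} [DecidableEq α] (z : Matrix β β ℂ) :
    Matrix (α × β) (α × β) ℂ :=
  fun p q => (if p.1 = q.1 then 1 else 0) * z p.2 q.2

/-- Entry formula for `u (E_{ij} ⊗ 1) uᴴ (1 ⊗ E_{ab})`. -/
lemma entry_helper {n k : ℕ} (u : Matrix (Fin n × Fin k) (Fin n × Fin k) ℂ)
    (i j : Fin n) (a b : Fin k) (p q : Fin n) (c d : Fin k) :
    ((u * tensorOne (Matrix.single i j (1:ℂ)) * uᴴ * oneTensor (Matrix.single a b 1)
      : Matrix (Fin n × Fin k) (Fin n × Fin k) ℂ)) (p,c) (q,d)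
    = (if d = b then 1 else 0) * ∑ f, u (p,c) (i,f) * star (u (q,a) (j,f)) := by
  simp only [Matrix.mul_apply, tensorOne, oneTensor, Matrix.single, conjTranspose_apply,
    Fintype.sum_prod_type, of_apply]
  simp [Finset.mul_sum, Finset.sum_mul, mul_comm, mul_assoc, mul_left_comm, ite_and,
    Finset.sum_ite_eq, Finset.sum_ite_eq', eq_comm]

/-- Reordering a triple sum. -/
lemma swap3 {M A B C : Type*} [AddCommMonoid M] [Fintype A] [Fintype B] [Fintype C]
    (f : A → B → C → M) :
    ∑ a, ∑ b, ∑ c, f a b c = ∑ c, ∑ b, ∑ a, f a b c := by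
  calc ∑ a, ∑ b, ∑ c, f a b c
      = ∑ a, ∑ c, ∑ b, f a b c := Finset.sum_congr rfl fun _ _ => Finset.sum_comm
    _ = ∑ c, ∑ a, ∑ b, f a b c := Finset.sum_comm
    _ = ∑ c, ∑ b, ∑ a, f a b c := Finset.sum_congr rfl fun _ _ => Finset.sum_comm

/-- The key algebraic identity: the `C`-weighted sum of the products
`u (E_{ij} ⊗ 1) uᴴ (1 ⊗ E_{ab})` equals `u * pt((pt u)ᴴ * pt C)`. -/
lemma lemA {n k : ℕ} (u C : Matrix (Fin n × Fin k) (Fin n × Fin k) ℂ) :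
    ∑ i, ∑ a, ∑ j, ∑ b, C (i,a) (j,b) •
      (u * tensorOne (Matrix.single i j (1:ℂ)) * uᴴ * oneTensor (Matrix.single a b 1))
    = u * pt ((pt u)ᴴ * pt C) := by
  ext ⟨p,c⟩ ⟨q,d⟩
  simp only [Matrix.sum_apply, Matrix.smul_apply, smul_eq_mul, entry_helper]
  simp only [Matrix.mul_apply, pt, conjTranspose_apply, Fintype.sum_prod_type,
    mul_ite, mul_one, mul_zero, ite_mul, zero_mul, one_mul,
    Finset.sum_ite_eq', Finset.sum_ite_eq, Finset.mem_univ, if_true]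
  refine Finset.sum_congr rfl fun i _ => ?_
  simp only [Finset.mul_sum]
  rw [swap3]
  exact Finset.sum_congr rfl fun f _ => Finset.sum_congr rfl fun j _ =>
    Finset.sum_congr rfl fun a _ => by ring

/-- The partial transpose is an involution. -/
lemma ptpt {α β : Type*} (w : Matrix (α × β) (α × β) ℂ) : pt (pt w) = w := by
  ext ⟨p1,p2⟩ ⟨q1,q2⟩; rfl

/-- For a biunitary `u ∈ M_n(ℂ) ⊗ M_k(ℂ)`, the linear span of the
products `u(y ⊗ 1)u* · (1 ⊗ z)` is all of `M_n(ℂ) ⊗ M_k(ℂ)`: the vertex-model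
commuting square of `u` is non-degenerate. -/
theorem vertex_model_nondegenerate
    (n k : ℕ) (u : Matrix (Fin n × Fin k) (Fin n × Fin k) ℂ)
    (hu : IsBiunitary u) :
    Submodule.span ℂ
      {x : Matrix (Fin n × Fin k) (Fin n × Fin k) ℂ |
        ∃ (y : Matrix (Fin n) (Fin n) ℂ) (z : Matrix (Fin k) (Fin k) ℂ),
          x = u * tensorOne (β := Fin k) y * uᴴ * oneTensor (α := Fin n) z} = ⊤ := by
  obtain ⟨h1, h2, h3, h4⟩ := hu
  rw [eq_top_iff]
  intro x _
  have key : x = ∑ i, ∑ a, ∑ j, ∑ b, (pt (pt u * pt (uᴴ * x))) (i,a) (j,b) •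
      (u * tensorOne (Matrix.single i j (1:ℂ)) * uᴴ * oneTensor (Matrix.single a b 1)) := by
    rw [lemA, ptpt, ← mul_assoc (pt u)ᴴ, h4, one_mul, ptpt, ← mul_assoc, h1, one_mul]
  rw [key]
  exact Submodule.sum_mem _ fun i _ => Submodule.sum_mem _ fun a _ =>
    Submodule.sum_mem _ fun j _ => Submodule.sum_mem _ fun b _ =>
    Submodule.smul_mem _ _ (Submodule.subset_span ⟨_, _, rfl⟩)
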